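/- Let r ≥ 1 be an integer and let x be sampled uniformly from the hypercube [0,1]^r. Then Pr[ ∏_{i=1}^r x_i ≥ (3/4)^r ] ≤ (2/3)^r. -/

import Mathlib

open MeasureTheory

/-- **Tightness of the anti-concentration inequality**: for `x` uniform on `[0,1]^r`,
the probability that `∏ x_i ≥ (3/4)^r` is at most `(2/3)^r`. -/
theorem product_concentration
    (r : ℕ) (hr : 1 ≤ r) :
    volume {x ∈ Set.univ.pi fun _ : Fin r => Set.Icc (0 : ℝ) 1 |
        (3 / 4 : ℝ) ^ r ≤ ∏ i, x i} ≤ ENNReal.ofReal ((2 / 3 : ℝ) ^ r) := by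
  classical
  set f : ℝ → ℝ := (Set.Icc (0:ℝ) 1).indicator id with hf
  have hfint : Integrable f := by
    rw [hf]
    exact (continuous_id.integrableOn_Icc).integrable_indicator measurableSet_Icc
  have hfnn : ∀ t, 0 ≤ f t := fun t =>
    Set.indicator_nonneg (fun y hy => hy.1) t
  have hfI : ∫ t, f t = 1/2 := by
    rw [hf, integral_indicator measurableSet_Icc]
    rw [MeasureTheory.integral_Icc_eq_integral_Ioc,
      ← intervalIntegral.integral_of_le zero_le_one]
    simp [integral_id]
  set F : (Fin r → ℝ) → ℝ := fun x => ∏ i, f (x i) with hF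
  have hFnn : ∀ x, 0 ≤ F x := fun x => Finset.prod_nonneg fun i _ => hfnn _
  have hFint : Integrable F := Integrable.fintype_prod (fun _ => hfint)
  have hFI : ∫ x, F x = (1/2 : ℝ)^r := by
    rw [hF]; beta_reduce; rw [volume_pi, MeasureTheory.integral_fintype_prod_eq_pow (ι := Fin r) f, hfI]
    simp
  have markov := mul_meas_ge_le_integral_of_nonneg
    (μ := volume) (ae_of_all _ hFnn) hFint ((3/4:ℝ)^r)
  rw [hFI] at markov
  set T := {x : Fin r → ℝ | (3/4:ℝ)^r ≤ F x} with hT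
  have hTcube : T ⊆ Set.univ.pi fun _ : Fin r => Set.Icc (0 : ℝ) 1 := by
    intro x hx
    intro i _
    by_contra hxi
    have h0 : F x = 0 := Finset.prod_eq_zero (Finset.mem_univ i)
      (by simp [hf, Set.indicator_of_notMem hxi])
    have : (3/4:ℝ)^r ≤ 0 := h0 ▸ hx
    exact absurd this (not_le.mpr (by positivity))
  have hTfin : volume T ≠ ⊤ := by
    have h1 : volume T ≤ volume (Set.univ.pi fun _ : Fin r => Set.Icc (0 : ℝ) 1) :=
      measure_mono hTcube
    have h2 : volume (Set.univ.pi fun _ : Fin r => Set.Icc (0 : ℝ) 1) = 1 := by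
      rw [volume_pi_pi]
      simp [Real.volume_Icc]
    exact ne_top_of_le_ne_top (by rw [h2]; exact ENNReal.one_ne_top) h1
  have hST : {x ∈ Set.univ.pi fun _ : Fin r => Set.Icc (0 : ℝ) 1 |
      (3 / 4 : ℝ) ^ r ≤ ∏ i, x i} ⊆ T := by
    rintro x ⟨hx, hge⟩
    have hFx : F x = ∏ i, x i := Finset.prod_congr rfl fun i _ => by
      simp [hf, Set.indicator_of_mem (hx i (Set.mem_univ i))]
    simpa [hT, hFx] using hge
  have htoReal : (volume T).toReal ≤ (2/3:ℝ)^r := by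
    have hpos : (0:ℝ) < (3/4:ℝ)^r := by positivity
    have h := (le_div_iff₀ hpos).mpr (by rw [mul_comm]; exact markov : (volume T).toReal * (3/4:ℝ)^r ≤ (1/2:ℝ)^r)
    calc (volume T).toReal ≤ (1/2:ℝ)^r / (3/4:ℝ)^r := h
      _ = (2/3:ℝ)^r := by rw [← div_pow]; norm_num
  calc volume {x ∈ Set.univ.pi fun _ : Fin r => Set.Icc (0 : ℝ) 1 |
        (3 / 4 : ℝ) ^ r ≤ ∏ i, x i} ≤ volume T := measure_mono hST
    _ = ENNReal.ofReal ((volume T).toReal) := (ENNReal.ofReal_toReal hTfin).symm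
    _ ≤ ENNReal.ofReal ((2/3:ℝ)^r) := ENNReal.ofReal_le_ofReal htoReal
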